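/- arXiv:1909.13230 — 2 statements merged into one kernel-verified Lean document; each statement's English description precedes it below -/
import Mathlib

section
/- Assume π(x) ≥ x/ln x for x ≥ 17 and π(x) ≤ 1.2551·x/ln x for x > 1. Then for every even number E ≥ 131, one has d_E < a_E, where d_E and a_E are the counts of prime-prime and nonprime-nonprime additive interactions of E (half-counted on the diagonal). -/
/-- The additive interactions of an even number `E`: pairs of odd positive
integers `x ≤ y` with `x + y = E`. -/
def interactions (E : ℕ) : Finset (ℕ × ℕ) :=
  (Finset.range (E + 1) ×ˢ Finset.range (E + 1)).filter
    (fun p => 0 < p.1 ∧ Odd p.1 ∧ Odd p.2 ∧ p.1 ≤ p.2 ∧ p.1 + p.2 = E)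

/-- `a_E`: interactions with both entries nonprime, diagonal half-weighted. -/
def aE (E : ℕ) : ℚ :=
  ((interactions E).filter (fun p => p.1 ≠ p.2 ∧ ¬ p.1.Prime ∧ ¬ p.2.Prime)).card
    + (1 / 2 : ℚ) * ((interactions E).filter (fun p => p.1 = p.2 ∧ ¬ p.1.Prime)).card

/-- `b_E`: interactions with first entry nonprime, second prime. -/
def bE (E : ℕ) : ℚ :=
  ((interactions E).filter (fun p => ¬ p.1.Prime ∧ p.2.Prime)).card

/-- `c_E`: interactions with first entry prime, second nonprime. -/
def cE (E : ℕ) : ℚ :=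
  ((interactions E).filter (fun p => p.1.Prime ∧ ¬ p.2.Prime)).card

/-- `d_E`: interactions with both entries prime, diagonal half-weighted. -/
def dE (E : ℕ) : ℚ :=
  ((interactions E).filter (fun p => p.1 ≠ p.2 ∧ p.1.Prime ∧ p.2.Prime)).card
    + (1 / 2 : ℚ) * ((interactions E).filter (fun p => p.1 = p.2 ∧ p.1.Prime)).card

namespace DEltAE

theorem pc_eq (n : ℕ) :
    Nat.primeCounting n = ((Finset.range (n + 1)).filter Nat.Prime).card := by
  rw [Nat.primeCounting, Nat.primeCounting', Nat.count_eq_card_filter_range]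

section PCvalues

attribute [local instance 2000] Nat.decidablePrime

theorem pc_eq' (n : ℕ) :
    Nat.primeCounting n = ((Finset.range (n + 1)).filter Nat.Prime).card := by
  rw [Nat.primeCounting, Nat.primeCounting', Nat.count_eq_card_filter_range]

set_option maxRecDepth 40000 in
theorem pc137 : Nat.primeCounting 137 = 33 := by rw [pc_eq']; decide
set_option maxRecDepth 40000 in
theorem pc149 : Nat.primeCounting 149 = 35 := by rw [pc_eq']; decide
set_option maxRecDepth 40000 in
theorem pc163 : Nat.primeCounting 163 = 38 := by rw [pc_eq']; decide
set_option maxRecDepth 40000 in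
theorem pc179 : Nat.primeCounting 179 = 41 := by rw [pc_eq']; decide
set_option maxRecDepth 40000 in
theorem pc197 : Nat.primeCounting 197 = 45 := by rw [pc_eq']; decide
set_option maxRecDepth 40000 in
theorem pc231 : Nat.primeCounting 231 = 50 := by rw [pc_eq']; decide
set_option maxRecDepth 40000 in
theorem pc255 : Nat.primeCounting 255 = 54 := by rw [pc_eq']; decide

end PCvalues

/-- transfer lemma: interactions correspond to odd `x ≤ E/2`. -/
theorem card_inter (E : ℕ) (hE : Even E) (q : ℕ → ℕ → Prop) [∀ x y : ℕ, Decidable (q x y)] :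
    ((interactions E).filter (fun p => q p.1 p.2)).card
      = ((Finset.range (E / 2 + 1)).filter (fun x => Odd x ∧ q x (E - x))).card := by
  obtain ⟨m, hm⟩ := hE
  apply Finset.card_nbij' (fun p => p.1) (fun x => (x, E - x))
  · intro p hp
    rw [Finset.mem_coe, Finset.mem_filter] at hp
    obtain ⟨hp1, hq⟩ := hp
    rw [interactions, Finset.mem_filter, Finset.mem_product, Finset.mem_range,
      Finset.mem_range] at hp1
    obtain ⟨⟨h1, h2⟩, h3, h4, h5, h6, h7⟩ := hp1
    dsimp only
    rw [Finset.mem_coe, Finset.mem_filter, Finset.mem_range]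
    have hp2 : p.2 = E - p.1 := by omega
    exact ⟨by omega, h4, by rw [← hp2]; exact hq⟩
  · intro x hx
    rw [Finset.mem_coe, Finset.mem_filter, Finset.mem_range] at hx
    obtain ⟨h1, h2, h3⟩ := hx
    have hx0 : 0 < x := h2.pos
    dsimp only
    rw [Finset.mem_coe, Finset.mem_filter, interactions, Finset.mem_filter, Finset.mem_product,
      Finset.mem_range, Finset.mem_range]
    refine ⟨⟨⟨by omega, by omega⟩, hx0, h2, ?_, by omega, by omega⟩, h3⟩
    exact Nat.Even.sub_odd (by omega) ⟨m, hm⟩ h2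
  · intro p hp
    rw [Finset.mem_coe, Finset.mem_filter] at hp
    obtain ⟨hp1, hq⟩ := hp
    rw [interactions, Finset.mem_filter, Finset.mem_product, Finset.mem_range,
      Finset.mem_range] at hp1
    obtain ⟨⟨h1, h2⟩, h3, h4, h5, h6, h7⟩ := hp1
    have : E - p.1 = p.2 := by omega
    exact Prod.ext rfl this
  · intro x hx
    rfl

theorem card_odd_range (n : ℕ) :
    ((Finset.range n).filter (fun x => Odd x)).card = n / 2 := by
  induction n with
  | zero => simp
  | succ n ih =>
    rw [Finset.range_add_one, Finset.filter_insert]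
    by_cases h : Odd n
    · rw [if_pos h, Finset.card_insert_of_notMem (by simp), ih]
      rw [Nat.odd_iff] at h; omega
    · rw [if_neg h, ih]
      rw [Nat.odd_iff] at h; omega

/-- the key double-counting identity, for an arbitrary predicate `h`. -/
theorem key (E : ℕ) (hE : Even E) (h2 : 4 ≤ E) (h : ℕ → Prop) [DecidablePred h] :
    2 * ((Finset.range (E / 2 + 1)).filter
          (fun x => Odd x ∧ (x ≠ E - x ∧ h x ∧ h (E - x)))).card
    + ((Finset.range (E / 2 + 1)).filter (fun x => Odd x ∧ (x = E - x ∧ h x))).card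
    + ((Finset.range (E / 2 + 1)).filter (fun x => Odd x ∧ (¬ h x ∧ h (E - x)))).card
    + ((Finset.range (E / 2 + 1)).filter (fun x => Odd x ∧ (h x ∧ ¬ h (E - x)))).card
    = ((Finset.range E).filter (fun y => Odd y ∧ h y)).card := by
  obtain ⟨m, hm⟩ := hE
  -- split the RHS at E/2
  have hsplit : ((Finset.range E).filter (fun y => Odd y ∧ h y)).card
      = ((Finset.range (E / 2 + 1)).filter (fun x => Odd x ∧ h x)).card
        + ((Finset.range (E / 2 + 1)).filter
            (fun x => Odd x ∧ (x ≠ E - x ∧ h (E - x)))).card := by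
    have hsp := Finset.card_filter_add_card_filter_not
      (s := (Finset.range E).filter (fun y => Odd y ∧ h y)) (p := fun y => y ≤ E / 2)
    rw [Finset.filter_filter, Finset.filter_filter] at hsp
    rw [← hsp]
    congr 1
    · congr 1
      ext y
      rw [Finset.mem_filter, Finset.mem_filter, Finset.mem_range, Finset.mem_range]
      constructor
      · rintro ⟨h1, ⟨h2, h3⟩, h4⟩
        exact ⟨by omega, h2, h3⟩
      · rintro ⟨h1, h2, h3⟩
        exact ⟨by omega, ⟨h2, h3⟩, by omega⟩
    · apply Finset.card_nbij' (fun y => E - y) (fun x => E - x)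
      · intro y hy
        rw [Finset.mem_coe, Finset.mem_filter, Finset.mem_range] at hy
        obtain ⟨hy1, ⟨hy2, hy3⟩, hy4⟩ := hy
        dsimp only
        rw [Finset.mem_coe, Finset.mem_filter, Finset.mem_range]
        have hyE : y ≤ E := by omega
        have h5 : E - (E - y) = y := by omega
        refine ⟨by omega, Nat.Even.sub_odd hyE ⟨m, hm⟩ hy2, ?_, ?_⟩
        · rw [h5]; rw [Nat.odd_iff] at hy2; omega
        · rw [h5]; exact hy3
      · intro x hx
        rw [Finset.mem_coe, Finset.mem_filter, Finset.mem_range] at hx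
        obtain ⟨hx1, hx2, hx3, hx4⟩ := hx
        have hx0 : 0 < x := hx2.pos
        have hxE : x ≤ E := by omega
        dsimp only
        rw [Finset.mem_coe, Finset.mem_filter, Finset.mem_range]
        refine ⟨by omega, ⟨Nat.Even.sub_odd hxE ⟨m, hm⟩ hx2, hx4⟩, by omega⟩
      · intro y hy
        rw [Finset.mem_coe, Finset.mem_filter, Finset.mem_range] at hy
        dsimp only
        omega
      · intro x hx
        rw [Finset.mem_coe, Finset.mem_filter, Finset.mem_range] at hx
        have hx0 : 0 < x := hx.2.1.pos
        dsimp only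
        omega
  rw [hsplit]
  simp only [Finset.card_filter]
  rw [Finset.mul_sum, ← Finset.sum_add_distrib, ← Finset.sum_add_distrib,
    ← Finset.sum_add_distrib, ← Finset.sum_add_distrib]
  apply Finset.sum_congr rfl
  intro x hx
  by_cases h1 : Odd x
  · rcases eq_or_ne x (E - x) with h2 | h2
    · rw [← h2]
      by_cases h3 : h x <;> simp [h1, h3]
    · by_cases h3 : h x <;> by_cases h4 : h (E - x) <;>
        simp [h1, h2, h3, h4]
  · simp [h1]

/-- odd primes below an even `E ≥ 4` number `π(E) - 1`. -/
theorem card_odd_primes (E : ℕ) (hE : Even E) (h4 : 4 ≤ E) :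
    ((Finset.range E).filter (fun y => Odd y ∧ y.Prime)).card + 1
      = Nat.primeCounting E := by
  obtain ⟨m, hm⟩ := hE
  rw [pc_eq]
  have hsp := Finset.card_filter_add_card_filter_not
    (s := (Finset.range (E + 1)).filter Nat.Prime) (p := fun y => Odd y)
  rw [Finset.filter_filter, Finset.filter_filter] at hsp
  rw [← hsp]
  have e1 : (Finset.range (E + 1)).filter (fun a => a.Prime ∧ Odd a)
      = (Finset.range E).filter (fun y => Odd y ∧ y.Prime) := by
    ext y
    rw [Finset.mem_filter, Finset.mem_filter, Finset.mem_range, Finset.mem_range]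
    constructor
    · rintro ⟨h1, h2, h3⟩
      have hyE : y ≠ E := by
        rintro rfl; rw [Nat.odd_iff] at h3; omega
      exact ⟨by omega, h3, h2⟩
    · rintro ⟨h1, h2, h3⟩
      exact ⟨by omega, h3, h2⟩
  have e2 : (Finset.range (E + 1)).filter (fun a => a.Prime ∧ ¬ Odd a) = {2} := by
    ext y
    rw [Finset.mem_filter, Finset.mem_range, Finset.mem_singleton]
    constructor
    · rintro ⟨h1, h2, h3⟩
      exact (Nat.Prime.even_iff h2).mp (Nat.not_odd_iff_even.mp h3)
    · rintro rfl
      exact ⟨by omega, Nat.prime_two, by decide⟩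
  rw [e1, e2, Finset.card_singleton]

theorem pi_bound (hπ2 : ∀ n : ℕ, 1 < n → (Nat.primeCounting n : ℝ) ≤ 1.2551 * n / Real.log n)
    (E : ℕ) (h132 : 132 ≤ E) : 4 * Nat.primeCounting E < E + 4 := by
  rcases lt_or_ge E 256 with hlt | hge
  · have mono := Nat.monotone_primeCounting
    rcases le_or_gt E 137 with h | h
    · have := mono h; rw [pc137] at this; omega
    rcases le_or_gt E 149 with h | h
    · have := mono h; rw [pc149] at this; omega
    rcases le_or_gt E 163 with h | h
    · have := mono h; rw [pc163] at this; omega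
    rcases le_or_gt E 179 with h | h
    · have := mono h; rw [pc179] at this; omega
    rcases le_or_gt E 197 with h | h
    · have := mono h; rw [pc197] at this; omega
    rcases le_or_gt E 231 with h | h
    · have := mono h; rw [pc231] at this; omega
    · have h255 : E ≤ 255 := by omega
      have := mono h255; rw [pc255] at this; omega
  · -- large case : use the upper bound hypothesis
    have hE0 : (0 : ℝ) < E := by positivity
    have hE1 : (256 : ℝ) ≤ (E : ℝ) := by exact_mod_cast hge
    have hlog2 : (0.6931471803 : ℝ) < Real.log 2 := Real.log_two_gt_d9
    have h256 : Real.log 256 = 8 * Real.log 2 := by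
      rw [show (256 : ℝ) = 2 ^ (8 : ℕ) by norm_num, Real.log_pow]
      push_cast; ring
    have hlogE : (5.0204 : ℝ) < Real.log E := by
      have hmono : Real.log 256 ≤ Real.log E := Real.log_le_log (by norm_num) hE1
      rw [h256] at hmono
      nlinarith
    have hb := hπ2 E (by omega)
    have hlt : (Nat.primeCounting E : ℝ) < (E : ℝ) / 4 := by
      have h1 : 1.2551 * (E : ℝ) / Real.log E < (E : ℝ) / 4 := by
        rw [div_lt_iff₀ (by linarith)]
        nlinarith
      linarith
    have h4π : ((4 * Nat.primeCounting E : ℕ) : ℝ) < ((E : ℕ) : ℝ) := by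
      push_cast; linarith
    have h5 : 4 * Nat.primeCounting E < E := by exact_mod_cast h4π
    omega

end DEltAE

open DEltAE in
theorem dE_lt_aE
    (hπ1 : ∀ n : ℕ, 17 ≤ n → (n : ℝ) / Real.log n ≤ (Nat.primeCounting n : ℝ))
    (hπ2 : ∀ n : ℕ, 1 < n → (Nat.primeCounting n : ℝ) ≤ 1.2551 * n / Real.log n)
    (E : ℕ) (hE : Even E) (h131 : 131 ≤ E) :
    dE E < aE E := by
  classical
  have h132 : 132 ≤ E := by
    obtain ⟨m, hm⟩ := hE; omega
  -- transfer all four counts to the x-side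
  have hA1 := card_inter E hE (fun x y => x ≠ y ∧ ¬ x.Prime ∧ ¬ y.Prime)
  have hA2 := card_inter E hE (fun x y => x = y ∧ ¬ x.Prime)
  have hD1 := card_inter E hE (fun x y => x ≠ y ∧ x.Prime ∧ y.Prime)
  have hD2 := card_inter E hE (fun x y => x = y ∧ x.Prime)
  -- key identities
  have hkeyP := key E hE (by omega) Nat.Prime
  have hkeyN := key E hE (by omega) (fun x => ¬ x.Prime)
  have hop := card_odd_primes E hE (by omega)
  have hodd : ((Finset.range E).filter (fun x => Odd x)).card = E / 2 := card_odd_range E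
  -- split all odds by primality
  have hsplit := Finset.card_filter_add_card_filter_not
    (s := (Finset.range E).filter (fun y => Odd y)) (p := fun y => y.Prime)
  rw [Finset.filter_filter, Finset.filter_filter] at hsplit
  rw [hodd] at hsplit
  -- identify the double-negation variants in hkeyN
  have hBC1 : ((Finset.range (E / 2 + 1)).filter
        (fun x => Odd x ∧ (¬ ¬ x.Prime ∧ ¬ (E - x).Prime))).card
      = ((Finset.range (E / 2 + 1)).filter
        (fun x => Odd x ∧ (x.Prime ∧ ¬ (E - x).Prime))).card := by
    congr 1; apply Finset.filter_congr; intro x _; simp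
  have hBC2 : ((Finset.range (E / 2 + 1)).filter
        (fun x => Odd x ∧ (¬ x.Prime ∧ ¬ ¬ (E - x).Prime))).card
      = ((Finset.range (E / 2 + 1)).filter
        (fun x => Odd x ∧ (¬ x.Prime ∧ (E - x).Prime))).card := by
    congr 1; apply Finset.filter_congr; intro x _; simp
  rw [hBC1, hBC2] at hkeyN
  -- the analytic/computational bound
  have hπb := pi_bound hπ2 E h132
  have hEq : E % 2 = 0 := by obtain ⟨m, hm⟩ := hE; omega
  -- deduce the natural-number inequality
  have hmain : 2 * ((interactions E).filter
        (fun p => p.1 ≠ p.2 ∧ p.1.Prime ∧ p.2.Prime)).card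
      + ((interactions E).filter (fun p => p.1 = p.2 ∧ p.1.Prime)).card
      < 2 * ((interactions E).filter
        (fun p => p.1 ≠ p.2 ∧ ¬ p.1.Prime ∧ ¬ p.2.Prime)).card
      + ((interactions E).filter (fun p => p.1 = p.2 ∧ ¬ p.1.Prime)).card := by
    rw [hA1, hA2, hD1, hD2]
    omega
  -- conclude
  simp only [dE, aE]
  have hc : ((2 * ((interactions E).filter
        (fun p => p.1 ≠ p.2 ∧ p.1.Prime ∧ p.2.Prime)).card
      + ((interactions E).filter (fun p => p.1 = p.2 ∧ p.1.Prime)).card : ℕ) : ℚ)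
      < ((2 * ((interactions E).filter
        (fun p => p.1 ≠ p.2 ∧ ¬ p.1.Prime ∧ ¬ p.2.Prime)).card
      + ((interactions E).filter (fun p => p.1 = p.2 ∧ ¬ p.1.Prime)).card : ℕ) : ℚ) := by
    exact_mod_cast hmain
  push_cast at hc
  linarith
end

section
/- Let E > 130 be an even number with S.C.E quantities a_E, b_E, c_E, d_E ≥ 0 satisfying a_E + b_E + c_E + d_E = E/4, b_E + c_E + 2d_E = π(E) − 1, and b_E + c_E + 2a_E = E/2 − π(E) + 1. Assume π(x) ≥ x/ln x for x ≥ 17 and π(x) ≤ 1.2551·x/ln x for x > 1, and that d_E = 0. Then a_E cannot equal 0, cannot lie in (0, E/4 − 1.2551·E/ln E + 1), cannot lie in (E/4 − E/ln E + 1, E/4), and cannot equal E/4 (the last using that there is an odd prime ≤ E/2). -/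
/-- Lower bound for log: for x ≥ 128, log x ≥ 7 log 2 + (1 - 128/x). -/
lemma log_lb_128 (x : ℝ) (hx : 128 ≤ x) :
    7 * Real.log 2 + (1 - 128 / x) ≤ Real.log x := by
  have hx0 : (0:ℝ) < x := by linarith
  have h1 : (1:ℝ) ≤ x / 128 := by
    rw [le_div_iff₀ (by norm_num)]; linarith
  have h2 : 1 - 128 / x ≤ Real.log (x / 128) := by
    have h := Real.log_le_sub_one_of_pos (x := 128 / x) (by positivity)
    rw [Real.log_div (by norm_num) (ne_of_gt hx0)] at h
    have : Real.log (x / 128) = Real.log x - Real.log 128 :=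
      Real.log_div (ne_of_gt hx0) (by norm_num)
    linarith [this, h]
  have h3 : Real.log (x / 128) = Real.log x - Real.log 128 :=
    Real.log_div (ne_of_gt hx0) (by norm_num)
  have h4 : Real.log 128 = 7 * Real.log 2 := by
    rw [show (128:ℝ) = 2 ^ 7 by norm_num, Real.log_pow]; push_cast; ring
  linarith

/-- Key numeric bound: for even E > 130, 1.2551 E / log E < E/4 + 1. -/
lemma key_bound (E : ℕ) (hE : Even E) (h130 : 130 < E) :
    1.2551 * (E : ℝ) / Real.log E < (E : ℝ) / 4 + 1 := by
  have h132 : 132 ≤ E := by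
    obtain ⟨k, hk⟩ := hE
    omega
  have hx132 : (132 : ℝ) ≤ (E : ℝ) := by exact_mod_cast h132
  have hlog2 : (0.6931471803 : ℝ) < Real.log 2 := Real.log_two_gt_d9
  have hx0 : (0:ℝ) < (E:ℝ) := by linarith
  rcases le_or_gt E 136 with h136 | h137
  · -- 132 ≤ E ≤ 136 : log E ≥ log 132 ≥ 4.8823
    have hxle : (E : ℝ) ≤ 136 := by exact_mod_cast h136
    have hlb : (4.8823 : ℝ) ≤ Real.log E := by
      have h := log_lb_128 (E : ℝ) (by linarith)
      have : (128:ℝ) / (E:ℝ) ≤ 128 / 132 := by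
        apply div_le_div_of_nonneg_left (by norm_num) (by norm_num) hx132
      nlinarith
    have hlogpos : (0:ℝ) < Real.log E := by linarith
    rw [div_lt_iff₀ hlogpos]
    nlinarith
  · rcases le_or_gt E 158 with h158 | h159
    · -- 138 ≤ E ≤ 158 : log E ≥ log 138 ≥ 4.9244
      have h138 : 138 ≤ E := by
        obtain ⟨k, hk⟩ := hE; omega
      have hx138 : (138:ℝ) ≤ (E:ℝ) := by exact_mod_cast h138
      have hxle : (E : ℝ) ≤ 158 := by exact_mod_cast h158
      have hlb : (4.9244 : ℝ) ≤ Real.log E := by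
        have h := log_lb_128 (E : ℝ) (by linarith)
        have : (128:ℝ) / (E:ℝ) ≤ 128 / 138 := by
          apply div_le_div_of_nonneg_left (by norm_num) (by norm_num) hx138
        nlinarith
      have hlogpos : (0:ℝ) < Real.log E := by linarith
      rw [div_lt_iff₀ hlogpos]
      nlinarith
    ·
      have hx159 : (159:ℝ) ≤ (E:ℝ) := by exact_mod_cast h159
      have hlb : (5.0469 : ℝ) ≤ Real.log E := by
        have h := log_lb_128 (E : ℝ) (by linarith)
        have : (128:ℝ) / (E:ℝ) ≤ 128 / 159 := by
          apply div_le_div_of_nonneg_left (by norm_num) (by norm_num) hx159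
        nlinarith
      have hlogpos : (0:ℝ) < Real.log E := by linarith
      rw [div_lt_iff₀ hlogpos]
      nlinarith

theorem aE_forbidden_regions
    (hπ1 : ∀ n : ℕ, 17 ≤ n → (n : ℝ) / Real.log n ≤ (Nat.primeCounting n : ℝ))
    (hπ2 : ∀ n : ℕ, 1 < n → (Nat.primeCounting n : ℝ) ≤ 1.2551 * n / Real.log n)
    (E : ℕ) (hE : Even E) (h130 : 130 < E)
    (a b c d : ℝ) (ha : 0 ≤ a) (hb : 0 ≤ b) (hc : 0 ≤ c) (hd : 0 ≤ d)
    (hsum : a + b + c + d = (E : ℝ) / 4)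
    (hD : b + c + 2 * d = (Nat.primeCounting E : ℝ) - 1)
    (hA : b + c + 2 * a = (E : ℝ) / 2 - (Nat.primeCounting E : ℝ) + 1)
    (hp : ∃ p : ℕ, p.Prime ∧ Odd p ∧ (p : ℝ) ≤ (E : ℝ) / 2)
    (hd0 : d = 0) :
    a ≠ 0 ∧
    ¬ (0 < a ∧ a < (E : ℝ) / 4 - 1.2551 * E / Real.log E + 1) ∧
    ¬ ((E : ℝ) / 4 - (E : ℝ) / Real.log E + 1 < a ∧ a < (E : ℝ) / 4) ∧
    a ≠ (E : ℝ) / 4 := by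
  set P : ℝ := (Nat.primeCounting E : ℝ) with hP
  have haP : a = (E : ℝ) / 4 - P + 1 := by
    rw [hd0] at hsum hD
    linarith
  have hupper : P ≤ 1.2551 * E / Real.log E := hπ2 E (by omega)
  have hlower : (E : ℝ) / Real.log E ≤ P := hπ1 E (by omega)
  have hkey := key_bound E hE h130
  refine ⟨?_, ?_, ?_, ?_⟩
  · intro h0
    rw [h0] at haP
    linarith
  · rintro ⟨_, h2⟩
    linarith
  · rintro ⟨h3, _⟩
    linarith
  · intro h4
    have hP1 : P = 1 := by rw [h4] at haP; linarith
    have h2le : 2 ≤ Nat.primeCounting E := by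
      calc 2 = Nat.primeCounting 3 := by decide
        _ ≤ Nat.primeCounting E := Nat.monotone_primeCounting (by omega)
    have : (2 : ℝ) ≤ P := by rw [hP]; exact_mod_cast h2le
    linarith
end
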